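/- For any legal schedule of the form W = (1, w_2, ..., w_{k-1}), the polynomial Q_W(x;q) has the form Q_W(x;q) = A_1(q) x + A_k(q) x^k with A_1(q) = q A_k(q) and A_k(q) = Π_{i=1}^{k-1} [w_i]_q; in particular Q_W satisfies the functional equation (1-q/x)Q_W(x;q) + x^k(1-qx)Q_W(1/x;q) = (1+x^k)(1-q^2)Π_{i=1}^{k-1}[w_i]_q. -/

import Mathlib

open Polynomial Finset

noncomputable section

abbrev K : Type := RatFunc ℚ

def qq : K := RatFunc.X

def qint (q : K) (n : ℕ) : K := ∑ i ∈ Finset.range n, q ^ i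

def Legal (W : List ℕ) : Prop :=
  (∀ h : W ≠ [], 1 ≤ W.head h ∧ W.head h ≤ 2) ∧
    List.Chain' (fun a b => 1 ≤ b ∧ b ≤ a + 1) W

def Prev (q : K) : List ℕ → MvPolynomial ℤ K
  | [] => MvPolynomial.C q * MvPolynomial.X (-1) + MvPolynomial.X 0
  | w :: V =>
      MvPolynomial.C ((1 - q)⁻¹) *
        ((MvPolynomial.X ((V.length : ℤ) + 1) - MvPolynomial.C (q ^ w)) * Prev q V +
          (1 - MvPolynomial.X ((V.length : ℤ) + 1)) *
            MvPolynomial.aeval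
              (fun j : ℤ =>
                if (V.length : ℤ) + 1 - (w : ℤ) ≤ j ∧ j ≤ (V.length : ℤ) then
                  MvPolynomial.C q * MvPolynomial.X j
                else MvPolynomial.X j)
              (Prev q V))

def Psched (q : K) (W : List ℕ) : MvPolynomial ℤ K := Prev q W.reverse

def Qsched (q : K) (W : List ℕ) : Polynomial K :=
  MvPolynomial.aeval (fun _ : ℤ => (Polynomial.X : Polynomial K)) (Psched q W)

def TameFE (q : K) (W : List ℕ) : Prop :=
  ∀ x : K, x ≠ 0 →
    (1 - q / x) * (Qsched q W).eval x +
        x ^ (W.length + 1) * (1 - q * x) * (Qsched q W).eval x⁻¹ =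
      (1 + x ^ (W.length + 1)) * ((1 - q ^ 2) * (W.map (qint q)).prod)


lemma qq_ne_one : qq ≠ 1 := by
  intro h
  have hX : (Polynomial.X : Polynomial ℚ) = 1 := by
    apply IsFractionRing.injective (Polynomial ℚ) (RatFunc ℚ)
    rw [map_one, RatFunc.algebraMap_X]
    exact h
  have := congrArg (Polynomial.eval 0) hX
  simp at this

lemma one_sub_qq_ne : (1 : K) - qq ≠ 0 := by
  intro h
  exact qq_ne_one (by linear_combination -h)

def GoodL : List ℕ → Prop
  | [] => True
  | w :: V => 1 ≤ w ∧ w ≤ V.length + 1 ∧ GoodL V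

lemma prod_ite_twist (q : K) (n w : ℕ) (hw : w ≤ n + 1) :
    (∏ j ∈ Finset.range (n + 1),
        (if (n : ℤ) + 1 - (w : ℤ) ≤ (j : ℤ) ∧ (j : ℤ) ≤ (n : ℤ) then
            MvPolynomial.C q * MvPolynomial.X ((j : ℕ) : ℤ)
          else (MvPolynomial.X ((j : ℕ) : ℤ) : MvPolynomial ℤ K))) =
      MvPolynomial.C (q ^ w) * ∏ j ∈ Finset.range (n + 1), MvPolynomial.X ((j : ℕ) : ℤ) := by
  have step : ∀ j ∈ Finset.range (n + 1),
      (if (n : ℤ) + 1 - (w : ℤ) ≤ (j : ℤ) ∧ (j : ℤ) ≤ (n : ℤ) then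
          MvPolynomial.C q * MvPolynomial.X ((j : ℕ) : ℤ)
        else (MvPolynomial.X ((j : ℕ) : ℤ) : MvPolynomial ℤ K)) =
      (if n + 1 - w ≤ j then MvPolynomial.C q else 1) * MvPolynomial.X ((j : ℕ) : ℤ) := by
    intro j hj
    simp only [Finset.mem_range] at hj
    have hcond : ((n : ℤ) + 1 - (w : ℤ) ≤ (j : ℤ) ∧ (j : ℤ) ≤ (n : ℤ)) ↔ n + 1 - w ≤ j := by
      omega
    rw [if_congr hcond rfl rfl]
    split <;> simp
  rw [Finset.prod_congr rfl step, Finset.prod_mul_distrib]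
  congr 1
  rw [Finset.prod_ite, Finset.prod_const, Finset.prod_const_one, mul_one]
  have hfil : (Finset.range (n + 1)).filter (fun j => n + 1 - w ≤ j) =
      Finset.Ico (n + 1 - w) (n + 1) := by
    ext j
    simp only [Finset.mem_filter, Finset.mem_range, Finset.mem_Ico]
    omega
  rw [hfil, Nat.card_Ico, map_pow]
  congr 1
  omega

lemma prev_closed (q : K) (hq : (1 : K) - q ≠ 0) :
    ∀ V : List ℕ, GoodL V →
      Prev q V =
        MvPolynomial.C (q * (V.map (qint q)).prod) * MvPolynomial.X (-1) +
          MvPolynomial.C ((V.map (qint q)).prod) *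
            ∏ j ∈ Finset.range (V.length + 1), MvPolynomial.X ((j : ℕ) : ℤ)
  | [], _ => by
    simp [Prev]
  | w :: V, ⟨hw1, hw2, hV⟩ => by
    have ih := prev_closed q hq V hV
    have hw' : qint q w = (1 - q)⁻¹ * (1 - q ^ w) := by
      rw [inv_mul_eq_div, eq_div_iff hq, qint]
      linear_combination (-1 : K) * geom_sum_mul q w
    rw [Prev, ih]
    simp only [map_add, map_mul, map_prod, MvPolynomial.aeval_C, MvPolynomial.aeval_X,
      MvPolynomial.algebraMap_eq]
    rw [if_neg (show ¬(((V.length : ℤ) + 1 - (w : ℤ) ≤ (-1 : ℤ)) ∧ ((-1 : ℤ) ≤ (V.length : ℤ)))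
      from by omega)]
    rw [prod_ite_twist q V.length w hw2]
    simp only [List.map_cons, List.prod_cons, List.length_cons]
    conv_rhs => rw [show V.length + 1 + 1 = (V.length + 1) + 1 from rfl, Finset.prod_range_succ]
    push_cast
    simp only [hw', map_mul, map_sub, map_one, map_pow]
    ring

lemma goodL_of_bound :
    ∀ V : List ℕ, (∀ i (h : i < V.length), 1 ≤ V[i] ∧ V[i] + i ≤ V.length) → GoodL V
  | [], _ => trivial
  | w :: V, h => by
    have h0 := h 0 (by simp)
    refine ⟨h0.1, by simpa using h0.2, goodL_of_bound V fun i hi => ?_⟩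
    have := h (i + 1) (by simp; omega)
    simp only [List.getElem_cons_succ, List.length_cons] at this
    omega

lemma legal_bound (W' : List ℕ) (hW : Legal (1 :: W')) :
    ∀ i (h : i < (1 :: W').length), 1 ≤ (1 :: W')[i] ∧ (1 :: W')[i] ≤ i + 1 := by
  intro i
  induction i with
  | zero => intro h; simp
  | succ i ih =>
    intro h
    have h1 := ih (by omega)
    have h2 := (List.isChain_iff_getElem.mp hW.2) i
      (by simp only [List.length_cons] at h ⊢; omega)
    exact ⟨h2.1, by omega⟩

lemma good_rev (W : List ℕ)
    (h : ∀ i (hi : i < W.length), 1 ≤ W[i] ∧ W[i] ≤ i + 1) : GoodL W.reverse := by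
  apply goodL_of_bound
  intro i hi
  rw [List.length_reverse] at hi
  simp only [List.getElem_reverse, List.length_reverse]
  have := h (W.length - 1 - i) (by omega)
  omega

/-- for a legal schedule W = (1,w_2,…,w_{k-1}),
Q_W(x;q) = A_1 x + A_k x^k with A_1 = q·A_k and A_k = ∏[w_i]_q, and Q_W
satisfies the functional equation. Here k = (1::W').length + 1. -/
theorem stmt7 (W' : List ℕ) (hW : Legal (1 :: W')) :
    Qsched qq (1 :: W') =
        Polynomial.C (qq * ((1 :: W').map (qint qq)).prod) * Polynomial.X +
          Polynomial.C (((1 :: W').map (qint qq)).prod) * Polynomial.X ^ (W'.length + 2) ∧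
      TameFE qq (1 :: W')  := by
  have hq : (1 : K) - qq ≠ 0 := one_sub_qq_ne
  have hgood : GoodL ((1 :: W').reverse) := good_rev _ (legal_bound W' hW)
  have hA : (((1 :: W').reverse).map (qint qq)).prod = ((1 :: W').map (qint qq)).prod := by
    rw [List.map_reverse, List.prod_reverse]
  have hlen : ((1 :: W').reverse).length = W'.length + 1 := by simp
  have hP := prev_closed qq hq ((1 :: W').reverse) hgood
  have hQ : Qsched qq (1 :: W') =
      Polynomial.C (qq * ((1 :: W').map (qint qq)).prod) * Polynomial.X +
        Polynomial.C (((1 :: W').map (qint qq)).prod) * Polynomial.X ^ (W'.length + 2) := by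
    rw [Qsched, Psched, hP]
    simp only [map_add, map_mul, map_prod, MvPolynomial.aeval_C, MvPolynomial.aeval_X,
      Polynomial.algebraMap_eq, Finset.prod_const, Finset.card_range, hA, hlen]
  refine ⟨hQ, ?_⟩
  intro x hx
  rw [hQ]
  simp only [Polynomial.eval_add, Polynomial.eval_mul, Polynomial.eval_C, Polynomial.eval_pow,
    Polynomial.eval_X, List.length_cons]
  set A := ((1 :: W').map (qint qq)).prod with hAdef
  field_simp
  have hxn : x ^ W'.length * x⁻¹ ^ W'.length = 1 := by rw [← mul_pow, mul_inv_cancel₀ hx, one_pow]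
  have hx1 : x * x⁻¹ = 1 := mul_inv_cancel₀ hx
  linear_combination (A * x ^ 3 * x⁻¹ ^ 2 - A * x ^ 4 * qq * x⁻¹ ^ 2) * hxn +
    (A * x * (x * x⁻¹ + 1) - A * x ^ 2 * qq * (x * x⁻¹ + 1)) * hx1


end
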